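/- arXiv:2307.02823 — 5 statements merged into one kernel-verified Lean document; each statement's English description precedes it below -/
import Mathlib

section
/- A monic real cubic polynomial s^3 + a1*s^2 + a2*s + a3 has all its complex roots with strictly negative real part if and only if a1 > 0, a3 > 0, and a1*a2 - a3 > 0. -/
open Polynomial Complex

/-- A monic quadratic with positive real coefficients has all complex roots with
negative real part. -/
lemma quad_root_neg_re (b c : ℝ) (hb : 0 < b) (hc : 0 < c) (z : ℂ)
    (hz : z ^ 2 + (b : ℂ) * z + (c : ℂ) = 0) : z.re < 0 := by
  by_contra hx
  push_neg at hx
  set x := z.re with hxdef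
  set y := z.im with hydef
  have hre : x ^ 2 - y ^ 2 + b * x + c = 0 := by
    have := congrArg Complex.re hz
    simpa [Complex.add_re, Complex.mul_re, Complex.sq_norm, pow_two,
      Complex.ofReal_re, Complex.ofReal_im] using this
  have him : 2 * x * y + b * y = 0 := by
    have h := congrArg Complex.im hz
    simp [Complex.add_im, Complex.mul_im, pow_two,
      Complex.ofReal_re, Complex.ofReal_im] at h
    linear_combination h

  have hy2 : y ^ 2 * (2 * x + b) = 0 := by nlinarith [him]
  have hy : y ^ 2 = 0 := by
    have : 0 < 2 * x + b := by linarith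
    rcases mul_eq_zero.mp hy2 with h | h
    · exact h
    · linarith
  nlinarith [hre, hy, sq_nonneg x]

/-- Existence of a real root of a monic real cubic. -/
lemma cubic_exists_real_root (a1 a2 a3 : ℝ) :
    ∃ r : ℝ, r ^ 3 + a1 * r ^ 2 + a2 * r + a3 = 0 := by
  set f : ℝ → ℝ := fun x => x ^ 3 + a1 * x ^ 2 + a2 * x + a3 with hf
  have hcont : Continuous f := by fun_prop
  set M : ℝ := 1 + |a1| + |a2| + |a3| with hM
  have h1 : (1 : ℝ) ≤ M := by
    have := abs_nonneg a1; have := abs_nonneg a2; have := abs_nonneg a3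
    linarith
  have ha1 : -|a1| ≤ a1 := neg_abs_le a1
  have ha1' : a1 ≤ |a1| := le_abs_self a1
  have ha2 : -|a2| ≤ a2 := neg_abs_le a2
  have ha2' : a2 ≤ |a2| := le_abs_self a2
  have ha3 : -|a3| ≤ a3 := neg_abs_le a3
  have ha3' : a3 ≤ |a3| := le_abs_self a3
  have hfm : f (-M) ≤ 0 := by
    show (-M) ^ 3 + a1 * (-M) ^ 2 + a2 * (-M) + a3 ≤ 0
    nlinarith [sq_nonneg M, abs_nonneg a1, abs_nonneg a2, abs_nonneg a3]
  have hfp : 0 ≤ f M := by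
    show 0 ≤ M ^ 3 + a1 * M ^ 2 + a2 * M + a3
    nlinarith [sq_nonneg M, abs_nonneg a1, abs_nonneg a2, abs_nonneg a3]
  have hle : -M ≤ M := by linarith
  have := intermediate_value_Icc hle hcont.continuousOn
  have hmem : (0 : ℝ) ∈ Set.Icc (f (-M)) (f M) := ⟨hfm, hfp⟩
  obtain ⟨r, _, hr⟩ := this hmem
  exact ⟨r, hr⟩

theorem cubic_routh_hurwitz (a1 a2 a3 : ℝ) :
    (∀ z : ℂ, (X ^ 3 + C (a1 : ℂ) * X ^ 2 + C (a2 : ℂ) * X + C (a3 : ℂ)).IsRoot z → z.re < 0) ↔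
      (0 < a1 ∧ 0 < a3 ∧ 0 < a1 * a2 - a3) := by
  obtain ⟨r, hr⟩ := cubic_exists_real_root a1 a2 a3
  set b : ℝ := a1 + r with hbdef
  set c : ℝ := r ^ 2 + a1 * r + a2 with hcdef
  have ha1 : a1 = b - r := by rw [hbdef]; ring
  have ha2 : a2 = c - r * b := by rw [hcdef, hbdef]; ring
  have ha3 : a3 = -(r * c) := by rw [hcdef]; nlinarith [hr]
  have hroot : ∀ z : ℂ,
      (X ^ 3 + C (a1 : ℂ) * X ^ 2 + C (a2 : ℂ) * X + C (a3 : ℂ)).IsRoot z ↔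
        z ^ 3 + (a1 : ℂ) * z ^ 2 + (a2 : ℂ) * z + (a3 : ℂ) = 0 := by
    intro z
    simp [Polynomial.IsRoot, Polynomial.eval_add, Polynomial.eval_mul,
      Polynomial.eval_pow, Polynomial.eval_C, Polynomial.eval_X]
  have hrC : (r : ℂ) ^ 3 + (a1 : ℂ) * (r : ℂ) ^ 2 + (a2 : ℂ) * r + (a3 : ℂ) = 0 := by
    exact_mod_cast congrArg (Complex.ofReal) hr
  have hfactor : ∀ z : ℂ,
      z ^ 3 + (a1 : ℂ) * z ^ 2 + (a2 : ℂ) * z + (a3 : ℂ) =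
        (z - r) * (z ^ 2 + (b : ℂ) * z + (c : ℂ)) := by
    intro z
    have hb' : (b : ℂ) = a1 + r := by push_cast [hbdef]; ring
    have hc' : (c : ℂ) = (r : ℂ) ^ 2 + a1 * r + a2 := by push_cast [hcdef]; ring
    rw [hb', hc']
    linear_combination hrC
  constructor
  · intro H
    have hrneg : r < 0 := by
      have := H r (by rw [hroot]; exact hrC)
      simpa using this
    -- show b > 0 and c > 0 via quadratic roots
    have hbc : 0 < b ∧ 0 < c := by
      rcases le_or_gt (b ^ 2 - 4 * c) 0 with hd | hd
      · -- complex conjugate roots (or double root): root z = -b/2 + i √(4c-b²)/2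
        set s : ℝ := Real.sqrt (4 * c - b ^ 2) with hs
        have hs2 : s ^ 2 = 4 * c - b ^ 2 := Real.sq_sqrt (by linarith)
        set z : ℂ := ⟨-b / 2, s / 2⟩ with hz
        have hzq : z ^ 2 + (b : ℂ) * z + (c : ℂ) = 0 := by
          apply Complex.ext
          · simp [hz, pow_two, Complex.mul_re, Complex.mul_im, Complex.add_re,
              Complex.ofReal_re, Complex.ofReal_im]
            linear_combination (-1/4 : ℝ) * hs2
          · simp [hz, pow_two, Complex.mul_re, Complex.mul_im, Complex.add_im,
              Complex.ofReal_re, Complex.ofReal_im]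
            ring
        have hzroot : z.re < 0 := by
          apply H
          rw [hroot, hfactor, hzq, mul_zero]
        have hzre : z.re = -b / 2 := rfl
        have hb0 : 0 < b := by rw [hzre] at hzroot; linarith
        exact ⟨hb0, by nlinarith⟩
      · -- two real roots
        set s : ℝ := Real.sqrt (b ^ 2 - 4 * c) with hs
        have hs2 : s ^ 2 = b ^ 2 - 4 * c := Real.sq_sqrt (by linarith)
        set x1 : ℝ := (-b + s) / 2 with hx1
        set x2 : ℝ := (-b - s) / 2 with hx2
        have hq1 : x1 ^ 2 + b * x1 + c = 0 := by rw [hx1]; linear_combination (1/4 : ℝ) * hs2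
        have hq2 : x2 ^ 2 + b * x2 + c = 0 := by rw [hx2]; linear_combination (1/4 : ℝ) * hs2
        have hx1neg : x1 < 0 := by
          have := H x1 (by
            rw [hroot, hfactor]
            have : ((x1 : ℂ)) ^ 2 + (b : ℂ) * x1 + (c : ℂ) = 0 := by
              exact_mod_cast congrArg (Complex.ofReal) hq1
            rw [this, mul_zero])
          simpa using this
        have hx2neg : x2 < 0 := by
          have := H x2 (by
            rw [hroot, hfactor]
            have : ((x2 : ℂ)) ^ 2 + (b : ℂ) * x2 + (c : ℂ) = 0 := by
              exact_mod_cast congrArg (Complex.ofReal) hq2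
            rw [this, mul_zero])
          simpa using this
        constructor
        · -- b = -(x1 + x2)
          have : x1 + x2 = -b := by rw [hx1, hx2]; ring
          linarith
        · -- c = x1 * x2
          have : x1 * x2 = c := by rw [hx1, hx2]; linear_combination (-1/4 : ℝ) * hs2
          nlinarith [mul_pos_of_neg_of_neg hx1neg hx2neg]
    obtain ⟨hb0, hc0⟩ := hbc
    refine ⟨by linarith [ha1], by nlinarith [ha3, mul_pos_of_neg_of_neg hrneg (neg_neg_iff_pos.mpr hc0)], ?_⟩
    have hpos : 0 < c - r * b + r ^ 2 := by nlinarith [mul_pos hb0 (neg_pos.mpr hrneg)]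
    have : a1 * a2 - a3 = b * (c - r * b + r ^ 2) := by rw [ha1, ha2, ha3]; ring
    rw [this]
    exact mul_pos hb0 hpos
  · rintro ⟨h1, h2, h3⟩ z hz
    -- derive r < 0, c > 0, b > 0
    have hrc : r * c < 0 := by rw [ha3] at h2; linarith
    have hrb : r < b := by rw [ha1] at h1; linarith
    have hkey : 0 < b * (c - r * b + r ^ 2) := by
      have : a1 * a2 - a3 = b * (c - r * b + r ^ 2) := by rw [ha1, ha2, ha3]; ring
      linarith [this ▸ h3]
    have hrneg : r < 0 := by
      by_contra hx
      push_neg at hx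
      have hr0 : 0 < r := by
        rcases lt_or_eq_of_le hx with h | h
        · exact h
        · exfalso; rw [← h] at hrc; simp at hrc
      have hcneg : c < 0 := by nlinarith
      nlinarith [mul_pos hr0 (sub_pos.mpr hrb)]
    have hc0 : 0 < c := by nlinarith
    have hb0 : 0 < b := by
      by_contra hx
      push_neg at hx
      rcases lt_or_eq_of_le hx with hbneg | hbeq
      · -- b < 0 : then r < b < 0 so r*b < r^2, hence c - r*b + r^2 > 0, product < 0
        have : r * b < r ^ 2 := by nlinarith
        nlinarith
      · rw [hbeq] at hkey; simp at hkey
    -- now use factorization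
    rw [hroot, hfactor] at hz
    rcases mul_eq_zero.mp hz with h | h
    · rw [sub_eq_zero] at h
      rw [h]
      simpa using hrneg
    · exact quad_root_neg_re b c hb0 hc0 z h
end

section
/- A monic real quartic polynomial s^4 + a1*s^3 + a2*s^2 + a3*s + a4 has all its complex roots with strictly negative real part if and only if a1 > 0, a1*a2 - a3 > 0, a4 > 0, and (a1*a2 - a3)*a3 - a1^2*a4 > 0. -/
open Polynomial Complex

open Polynomial Complex

private lemma exists_sum_prod (B Cc : ℂ) : ∃ u v : ℂ, u + v = -B ∧ u * v = Cc := by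
  obtain ⟨w, hw⟩ := IsAlgClosed.exists_pow_nat_eq (k := ℂ) (B ^ 2 / 4 - Cc) (n := 2) (by norm_num)
  exact ⟨-B / 2 + w, -B / 2 - w, by ring, by linear_combination -hw⟩

private lemma quadRootNeg {b c : ℝ} (hb : 0 < b) (hc : 0 < c) {z : ℂ}
    (hz : z ^ 2 + (b : ℂ) * z + (c : ℂ) = 0) : z.re < 0 := by
  have h1 := congrArg Complex.re hz
  have h2 := congrArg Complex.im hz
  simp [pow_two, Complex.mul_re, Complex.mul_im] at h1 h2
  rcases eq_or_ne z.im 0 with hy | hy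
  · nlinarith [sq_nonneg z.re]
  · have h3 : z.im * (2 * z.re + b) = 0 := by linear_combination h2
    have h4 := (mul_eq_zero.mp h3).resolve_left hy
    linarith

private lemma quadCoeffPos {b c : ℝ} {u v : ℂ} (hs : u + v = -(b : ℂ)) (hp : u * v = (c : ℂ))
    (hu : u.re < 0) (hv : v.re < 0) : 0 < b ∧ 0 < c := by
  have hs1 := congrArg Complex.re hs
  have hs2 := congrArg Complex.im hs
  have hp1 := congrArg Complex.re hp
  have hp2 := congrArg Complex.im hp
  simp [Complex.mul_re, Complex.mul_im] at hs1 hs2 hp1 hp2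
  refine ⟨by linarith, ?_⟩
  rcases eq_or_ne u.im 0 with h | h
  · have : v.im = 0 := by rw [h] at hs2; linarith
    rw [← hp1, h, this]
    nlinarith
  · have h5 : u.im * (v.re - u.re) = 0 := by linear_combination hp2 - u.re * hs2
    have h6 := (mul_eq_zero.mp h5).resolve_left h
    have h7 : v.re = u.re := by linarith
    have h8 : v.im = -u.im := by linarith
    rw [← hp1, h7, h8]
    nlinarith [sq_nonneg u.im]


private lemma keyConverse {b c d e : ℝ} (h1 : 0 < b + d)
    (h2 : 0 < b * c + d * e + b * d * (b + d)) (h3 : 0 < c * e)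
    (h4 : 0 < b * d * ((c - e) ^ 2 + (b * e + c * d) * (b + d))) :
    0 < b ∧ 0 < c ∧ 0 < d ∧ 0 < e := by
  -- Δ3 = (a1*a2-a3)*a3 - a1^2*a4 in terms of b,c,d,e :
  have hD3 : b * d * ((c - e) ^ 2 + (b * e + c * d) * (b + d))
      = (b * c + d * e + b * d * (b + d)) * (b * e + c * d) - (b + d) ^ 2 * (c * e) := by ring
  have ha3 : 0 < b * e + c * d := by
    by_contra h
    push_neg at h
    nlinarith [mul_pos (mul_pos h1 h1) h3, mul_nonneg (le_of_lt h2) (neg_nonneg.mpr h)]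
  have hbd : 0 < b * d := by
    by_contra h
    push_neg at h
    nlinarith [sq_nonneg (c - e), mul_pos ha3 h1]
  have hb : 0 < b := by nlinarith
  have hd : 0 < d := by nlinarith
  have hc : 0 < c := by
    rcases lt_trichotomy c 0 with h | h | h
    · have he : e < 0 := by nlinarith
      nlinarith
    · exfalso; rw [h] at h3; simp at h3
    · exact h
  have he : 0 < e := by nlinarith
  exact ⟨hb, hc, hd, he⟩


private lemma root_or_quad (P : ℝ[X]) (hd : P.natDegree ≠ 0) :
    (∃ r : ℝ, (X - C r) ∣ P) ∨ (∃ b c : ℝ, (X ^ 2 + C b * X + C c) ∣ P) := by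
  have hdeg : P.degree ≠ 0 := by
    intro h
    exact hd (natDegree_eq_zero_iff_degree_le_zero.mpr h.le)
  obtain ⟨z, hz⟩ := IsAlgClosed.exists_aeval_eq_zero ℂ P hdeg
  rcases eq_or_ne z.im 0 with him | him
  · left
    lift z to ℝ using him
    erw [aeval_ofReal, RCLike.ofReal_eq_zero] at hz
    exact ⟨z, dvd_iff_isRoot.mpr hz⟩
  · right
    refine ⟨-(2 * z.re), ‖z‖ ^ 2, ?_⟩
    have h := P.quadratic_dvd_of_aeval_eq_zero_im_ne_zero hz him
    convert h using 1
    rw [map_neg]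
    ring

private lemma cofactor {K : Type*} [Field K] {P D Q : K[X]} (hP : P.Monic) (hD : D.Monic)
    (h : P = D * Q) : Q.Monic ∧ P.natDegree = D.natDegree + Q.natDegree := by
  have hQm : Q.Monic := hD.of_mul_monic_left (h ▸ hP)
  exact ⟨hQm, by rw [h, natDegree_mul hD.ne_zero hQm.ne_zero]⟩

private lemma quad_monic (b c : ℝ) : (X ^ 2 + C b * X + C c : ℝ[X]).Monic := by monicity!

private lemma quad_natDegree (b c : ℝ) : (X ^ 2 + C b * X + C c : ℝ[X]).natDegree = 2 := by
  compute_degree!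

private lemma monic_nd2 {Q : ℝ[X]} (hm : Q.Monic) (h2 : Q.natDegree = 2) :
    ∃ d e : ℝ, Q = X ^ 2 + C d * X + C e := by
  rcases root_or_quad Q (by omega) with ⟨r, U, hU⟩ | ⟨d, e, U, hU⟩
  · obtain ⟨hUm, hdeg⟩ := cofactor hm (monic_X_sub_C r) hU
    rw [natDegree_X_sub_C, h2] at hdeg
    have h1 : U.natDegree = 1 := by omega
    obtain ⟨l, hUe⟩ : ∃ l, U = X + C l := ⟨_, hUm.eq_X_add_C h1⟩
    refine ⟨l - r, -r * l, ?_⟩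
    rw [hU, hUe]
    simp only [map_sub, map_neg, map_mul]
    ring
  · obtain ⟨hUm, hdeg⟩ := cofactor hm (quad_monic d e) hU
    rw [quad_natDegree, h2] at hdeg
    have h0 : U.natDegree = 0 := by omega
    have hU1 : U = 1 := hUm.natDegree_eq_zero.mp h0
    exact ⟨d, e, by rw [hU, hU1, mul_one]⟩

private lemma quartic_factor {P : ℝ[X]} (hm : P.Monic) (hd : P.natDegree = 4) :
    ∃ b c d e : ℝ, P = (X ^ 2 + C b * X + C c) * (X ^ 2 + C d * X + C e) := by
  rcases root_or_quad P (by omega) with ⟨r, P3, hP3⟩ | ⟨b, c, Q, hQ⟩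
  · obtain ⟨h3m, hdeg⟩ := cofactor hm (monic_X_sub_C r) hP3
    rw [natDegree_X_sub_C, hd] at hdeg
    have h3 : P3.natDegree = 3 := by omega
    rcases root_or_quad P3 (by omega) with ⟨r2, Q, hQ⟩ | ⟨d, e, L, hL⟩
    · obtain ⟨hQm, hdeg2⟩ := cofactor h3m (monic_X_sub_C r2) hQ
      rw [natDegree_X_sub_C, h3] at hdeg2
      obtain ⟨d, e, hQde⟩ := monic_nd2 hQm (by omega)
      refine ⟨-(r + r2), r * r2, d, e, ?_⟩
      rw [hP3, hQ, hQde]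
      simp only [map_neg, map_add, map_mul]
      ring
    · obtain ⟨hLm, hdeg2⟩ := cofactor h3m (quad_monic d e) hL
      rw [quad_natDegree, h3] at hdeg2
      obtain ⟨l, hLe⟩ : ∃ l, L = X + C l := ⟨_, hLm.eq_X_add_C (by omega)⟩
      refine ⟨l - r, -r * l, d, e, ?_⟩
      rw [hP3, hL, hLe]
      simp only [map_sub, map_neg, map_mul]
      ring
  · obtain ⟨hQm, hdeg⟩ := cofactor hm (quad_monic b c) hQ
    rw [quad_natDegree, hd] at hdeg
    obtain ⟨d, e, hQde⟩ := monic_nd2 hQm (by omega)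
    exact ⟨b, c, d, e, by rw [hQ, hQde]⟩

theorem quartic_routh_hurwitz (a1 a2 a3 a4 : ℝ) :
    (∀ z : ℂ, (X ^ 4 + C (a1 : ℂ) * X ^ 3 + C (a2 : ℂ) * X ^ 2 + C (a3 : ℂ) * X + C (a4 : ℂ)).IsRoot z → z.re < 0) ↔
      (0 < a1 ∧ 0 < a1 * a2 - a3 ∧ 0 < a4 ∧ 0 < (a1 * a2 - a3) * a3 - a1 ^ 2 * a4) := by
  obtain ⟨b, c, d, e, hfac⟩ := quartic_factor
    (P := X ^ 4 + C a1 * X ^ 3 + C a2 * X ^ 2 + C a3 * X + C a4)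
    (by monicity!) (by compute_degree!)
  have E : ∀ t : ℝ, t ^ 4 + a1 * t ^ 3 + a2 * t ^ 2 + a3 * t + a4
      = (t ^ 2 + b * t + c) * (t ^ 2 + d * t + e) := by
    intro t
    have h := congrArg (eval t) hfac
    simpa using h
  have hv1 : a1 = b + d := by
    linear_combination (E 2) / 12 - (E (-2)) / 12 - (E 1) / 6 + (E (-1)) / 6
  have hv2 : a2 = c + e + b * d := by
    linear_combination (E 1) / 2 + (E (-1)) / 2 - E 0
  have hv3 : a3 = b * e + c * d := by
    linear_combination 2 / 3 * (E 1) - 2 / 3 * (E (-1)) - (E 2) / 12 + (E (-2)) / 12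
  have hv4 : a4 = c * e := by linear_combination E 0
  have hcast : ∀ z : ℂ, z ^ 4 + (a1 : ℂ) * z ^ 3 + (a2 : ℂ) * z ^ 2 + (a3 : ℂ) * z + (a4 : ℂ)
      = (z ^ 2 + (b : ℂ) * z + (c : ℂ)) * (z ^ 2 + (d : ℂ) * z + (e : ℂ)) := by
    intro z
    rw [hv1, hv2, hv3, hv4]
    push_cast
    ring
  have hroot : ∀ z : ℂ,
      (X ^ 4 + C (a1 : ℂ) * X ^ 3 + C (a2 : ℂ) * X ^ 2 + C (a3 : ℂ) * X + C (a4 : ℂ)).IsRoot z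
        ↔ (z ^ 2 + (b : ℂ) * z + (c : ℂ)) * (z ^ 2 + (d : ℂ) * z + (e : ℂ)) = 0 := by
    intro z
    rw [IsRoot.def]
    simp only [eval_add, eval_mul, eval_pow, eval_C, eval_X]
    rw [hcast z]
  constructor
  · intro H
    obtain ⟨u, v, hsu, hpu⟩ := exists_sum_prod (b : ℂ) (c : ℂ)
    have hu0 : u ^ 2 + (b : ℂ) * u + (c : ℂ) = 0 := by linear_combination u * hsu - hpu
    have hv0 : v ^ 2 + (b : ℂ) * v + (c : ℂ) = 0 := by linear_combination v * hsu - hpu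
    have hur : u.re < 0 := H u ((hroot u).mpr (by rw [hu0, zero_mul]))
    have hvr : v.re < 0 := H v ((hroot v).mpr (by rw [hv0, zero_mul]))
    obtain ⟨hb, hc⟩ := quadCoeffPos hsu hpu hur hvr
    obtain ⟨u', v', hsu', hpu'⟩ := exists_sum_prod (d : ℂ) (e : ℂ)
    have hu0' : u' ^ 2 + (d : ℂ) * u' + (e : ℂ) = 0 := by linear_combination u' * hsu' - hpu'
    have hv0' : v' ^ 2 + (d : ℂ) * v' + (e : ℂ) = 0 := by linear_combination v' * hsu' - hpu'
    have hur' : u'.re < 0 := H u' ((hroot u').mpr (by rw [hu0', mul_zero]))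
    have hvr' : v'.re < 0 := H v' ((hroot v').mpr (by rw [hv0', mul_zero]))
    obtain ⟨hd, he⟩ := quadCoeffPos hsu' hpu' hur' hvr'
    refine ⟨by rw [hv1]; linarith, ?_, by rw [hv4]; exact mul_pos hc he, ?_⟩
    · rw [hv1, hv2, hv3]
      nlinarith [mul_pos hb hc, mul_pos hd he, mul_pos (mul_pos hb hd) (add_pos hb hd)]
    · rw [hv1, hv2, hv3, hv4]
      nlinarith [mul_pos (mul_pos hb hd) (add_pos_of_nonneg_of_pos (sq_nonneg (c - e))
        (mul_pos (add_pos (mul_pos hb he) (mul_pos hc hd)) (add_pos hb hd)))]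
  · intro H z hz
    obtain ⟨H1, H2, H3, H4⟩ := H
    rw [hv1] at H1
    rw [hv1, hv2, hv3] at H2
    rw [hv4] at H3
    rw [hv1, hv2, hv3, hv4] at H4
    have k2 : 0 < b * c + d * e + b * d * (b + d) := by nlinarith [H2]
    have k4 : 0 < b * d * ((c - e) ^ 2 + (b * e + c * d) * (b + d)) := by nlinarith [H4]
    obtain ⟨hb, hc, hd', he⟩ := keyConverse H1 k2 H3 k4
    rcases mul_eq_zero.mp ((hroot z).mp hz) with h | h
    · exact quadRootNeg hb hc h
    · exact quadRootNeg hd' he h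
end

section
/- A monic complex quadratic polynomial s^2 + (a1 + i*b1)*s + (a2 + i*b2) has both roots in the open left half-plane if and only if a1 > 0 and a1^2*a2 - a1*a3' + a1*b1*b2 - b2^2 > 0 where a3' = 0; i.e., if and only if a1 > 0 and a1^2*a2 + a1*b1*b2 - b2^2 > 0. -/
open Polynomial Complex

theorem quadratic_complex_routh_hurwitz (a1 b1 a2 b2 : ℝ) :
    (∀ z : ℂ, (X ^ 2 + C ((a1 : ℂ) + (b1 : ℂ) * I) * X + C ((a2 : ℂ) + (b2 : ℂ) * I)).IsRoot z → z.re < 0) ↔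
      (0 < a1 ∧ 0 < a1 ^ 2 * a2 + a1 * b1 * b2 - b2 ^ 2) := by
  set c : ℂ := (a1 : ℂ) + (b1 : ℂ) * I with hc
  set d : ℂ := (a2 : ℂ) + (b2 : ℂ) * I with hd
  have hroot : ∀ z : ℂ, (X ^ 2 + C c * X + C d).IsRoot z ↔ z ^ 2 + c * z + d = 0 := by
    intro z; simp [IsRoot]
  have hdeg : (X ^ 2 + C c * X + C d).degree = 2 := by compute_degree!
  obtain ⟨z1, hz1⟩ := Complex.exists_root (show (0 : WithBot ℕ) < (X ^ 2 + C c * X + C d).degree by rw [hdeg]; norm_num)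
  rw [hroot] at hz1
  set z2 : ℂ := -c - z1 with hz2def
  have hz2 : z2 ^ 2 + c * z2 + d = 0 := by rw [hz2def]; linear_combination hz1
  have hsumc : c = -(z1 + z2) := by rw [hz2def]; ring
  have hprodd : d = z1 * z2 := by rw [hz2def]; linear_combination hz1
  -- real relations
  have hca : a1 = -(z1.re + z2.re) := by
    have := congrArg Complex.re hsumc
    simpa [hc] using this
  have hcb : b1 = -(z1.im + z2.im) := by
    have := congrArg Complex.im hsumc
    simpa [hc] using this
  have hda : a2 = z1.re * z2.re - z1.im * z2.im := by
    have := congrArg Complex.re hprodd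
    simpa [hd, Complex.mul_re] using this
  have hdb : b2 = z1.re * z2.im + z1.im * z2.re := by
    have := congrArg Complex.im hprodd
    simpa [hd, Complex.mul_im] using this
  constructor
  · intro h
    have h1 : z1.re < 0 := h z1 ((hroot z1).mpr hz1)
    have h2 : z2.re < 0 := h z2 ((hroot z2).mpr hz2)
    have hp : 0 < z1.re * z2.re := mul_pos_of_neg_of_neg h1 h2
    refine ⟨by linarith, ?_⟩
    rw [hca, hcb, hda, hdb]
    nlinarith [sq_nonneg (z1.im - z2.im), sq_nonneg (z1.re + z2.re),
      mul_nonneg hp.le (sq_nonneg (z1.im - z2.im)),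
      mul_pos hp (mul_pos_of_neg_of_neg (show z1.re + z2.re < 0 by linarith) (show z1.re + z2.re < 0 by linarith))]
  · rintro ⟨hA, hB⟩ z hz
    rw [hroot] at hz
    rw [hca, hcb, hda, hdb] at hB
    have hsum : z1.re + z2.re < 0 := by
      rw [hca] at hA; linarith
    have hp : 0 < z1.re * z2.re := by
      nlinarith [sq_nonneg (z1.im - z2.im), sq_nonneg (z1.re + z2.re)]
    have h1 : z1.re < 0 := by nlinarith
    have h2 : z2.re < 0 := by nlinarith
    have hfac : (z - z1) * (z - z2) = 0 := by
      rw [hz2def]; linear_combination hz - hz1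
    rcases mul_eq_zero.mp hfac with h | h
    · rw [sub_eq_zero.mp h]; exact h1
    · rw [sub_eq_zero.mp h]; exact h2
end

section
/- Let k, ω, Ω, k_p, k_I be real with the conditions 2kω > 0, 2kω[2kω(ω² − Ω² − k_p) + k_I] > 0, and −8k_I²kωΩ² − k_I[2kω(ω² − Ω² − k_p) + k_I]² > 0 all satisfied. Then the 3×3 complex matrix A = [[0,1,0],[k_p + Ω² − ω², −(2kω + 2iΩ), k_I],[1,0,0]] is stable: every eigenvalue λ of A satisfies Re(λ) < 0. -/
open Complex

set_option maxHeartbeats 2000000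

private lemma rotating_shaft_key (A B b c x y : ℝ) (hA : 0 < A)
    (hDpos : 0 < A * (A * b - c))
    (hHpos : 0 < c * ((A * b - c) ^ 2 - A * B ^ 2 * c))
    (hE1 : x ^ 3 - 3 * x * y ^ 2 + A * (x ^ 2 - y ^ 2) - 2 * B * x * y + b * x + c = 0)
    (hE2 : 3 * x ^ 2 * y - y ^ 3 + B * (x ^ 2 - y ^ 2) + 2 * A * x * y + b * y = 0) :
    x < 0 := by
  have hD : 0 < A * b - c := by
    rcases mul_pos_iff.mp hDpos with ⟨_, h⟩ | ⟨h, _⟩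
    · exact h
    · linarith
  have hc : 0 < c := by
    rcases mul_pos_iff.mp hHpos with ⟨h, _⟩ | ⟨h1, h2⟩
    · exact h
    · exfalso
      have h3 : 0 ≤ A * B ^ 2 * (-c) :=
        mul_nonneg (mul_nonneg hA.le (sq_nonneg B)) (by linarith)
      nlinarith [sq_nonneg (A * b - c)]
  have hH2 : 0 < (A * b - c) ^ 2 - A * B ^ 2 * c := by
    rcases mul_pos_iff.mp hHpos with ⟨_, h⟩ | ⟨h, _⟩
    · exact h
    · linarith
  have hb : 0 < b := by
    by_contra hb'
    push_neg at hb'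
    nlinarith [mul_nonneg hA.le (neg_nonneg.mpr hb')]
  by_contra hx'
  push_neg at hx'
  -- the resultant identity
  have hR : 64*x^9 + 192*x^8*A + 224*x^7*A^2 + 32*x^7*B^2 + 96*x^7*b + 128*x^6*A^3 + 64*x^6*A*B^2 + 208*x^6*A*b + 48*x^6*c + 36*x^5*A^4 + 40*x^5*A^2*B^2 + 168*x^5*A^2*b + 96*x^5*A*c + 4*x^5*B^4 + 24*x^5*B^2*b + 36*x^5*b^2 + 4*x^4*A^5 + 8*x^4*A^3*B^2 + 60*x^4*A^3*b + 76*x^4*A^2*c + 4*x^4*A*B^4 + 28*x^4*A*B^2*b + 56*x^4*A*b^2 + 4*x^4*B^2*c + 12*x^4*b*c + 8*x^3*A^4*b + 28*x^3*A^3*c + 8*x^3*A^2*B^2*b + 29*x^3*A^2*b^2 + 12*x^3*A*B^2*c + 26*x^3*A*b*c + x^3*B^2*b^2 + 4*x^3*b^3 + (-15)*x^3*c^2 + 4*x^2*A^4*c + 5*x^2*A^3*b^2 + 4*x^2*A^2*B^2*c + 18*x^2*A^2*b*c + x^2*A*B^2*b^2 + 4*x^2*A*b^3 + (-15)*x^2*A*c^2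 + 4*x*A^3*b*c + x*A^2*b^3 + (-4)*x*A^2*c^2 + 2*x*A*b^2*c + (-1)*x*B^2*c^2 + (-3)*x*b*c^2 + A^2*b^2*c + (-1)*A*B^2*c^2 + (-2)*A*b*c^2 + c^3 = 0 := by
    linear_combination (64*x^6 + 128*x^5*A + 96*x^4*A^2 + 8*x^4*B^2 + 32*x^4*b + 32*x^3*A^3 + 12*x^3*A*B^2 + 48*x^3*A*b + (-16)*x^3*c + 4*x^2*A^4 + 4*x^2*A^2*B^2 + 24*x^2*A^2*b + (-16)*x^2*A*c + x^2*B^2*b + 4*x^2*b^2 + 4*x*A^3*b + (-4)*x*A^2*c + x*A*B^2*b + 4*x*A*b^2 + (-1)*x*B^2*c + (-4)*x*b*c + A^2*b^2 + (-1)*A*B^2*c + (-2)*A*b*c + c^2 + (-16)*x^4*B*y + (-28)*x^3*A*B*y + (-14)*x^2*A^2*B*y + (-2)*x^2*B^3*y + (-7)*x^2*B*b*y + (-2)*x*A^3*B*y + (-2)*x*A*B^3*y + (-6)*x*A*B*b*y + 2*x*B*c*y + (-1)*A^2*B*b*y + (-24)*x^4*y^2 + (-32)*x^3*A*y^2 +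 (-14)*x^2*A^2*y^2 + (-2)*x^2*B^2*y^2 + (-6)*x^2*b*y^2 + (-2)*x*A^3*y^2 + (-2)*x*A*B^2*y^2 + (-5)*x*A*b*y^2 + 3*x*c*y^2 + (-1)*A^2*b*y^2 + A*c*y^2) * hE1 + (24*x^5*B + 44*x^4*A*B + 24*x^3*A^2*B + 4*x^3*B^3 + 15*x^3*B*b + 4*x^2*A^3*B + 4*x^2*A*B^3 + 14*x^2*A*B*b + (-3)*x^2*B*c + 3*x*A^2*B*b + 2*x*A*B*c + A^2*B*c + 72*x^5*y + 120*x^4*A*y + 74*x^3*A^2*y + 6*x^3*B^2*y + 18*x^3*b*y + 20*x^2*A^3*y + 8*x^2*A*B^2*y + 21*x^2*A*b*y + (-9)*x^2*c*y + 2*x*A^4*y + 2*x*A^2*B^2*y + 8*x*A^2*b*y + (-6)*x*A*c*y + A^3*b*y + (-1)*A^2*c*y) * hE2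
  -- positivity of the coefficients
  have hq : 0 < A^2*b^2 + A*b*c + c^2 := by positivity
  have g9 : (0:ℝ) < 64 := by norm_num
  have g8 : 0 < 192*A := by linarith
  have g7 : 0 < 224*A^2 + 32*B^2 + 96*b := by positivity
  have g6 : 0 < 128*A^3 + 64*A*B^2 + 208*A*b + 48*c := by positivity
  have g5 : 0 < 36*A^4 + 40*A^2*B^2 + 168*A^2*b + 96*A*c + 4*B^4 + 24*B^2*b + 36*b^2 := by positivity
  have g4 : 0 < 4*A^5 + 8*A^3*B^2 + 60*A^3*b + 76*A^2*c + 4*A*B^4 + 28*A*B^2*b + 56*A*b^2 + 4*B^2*c + 12*b*c := by positivity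
  have g3 : 0 < 8*A^4*b + 28*A^3*c + 8*A^2*B^2*b + 29*A^2*b^2 + 12*A*B^2*c + 26*A*b*c + B^2*b^2 + 4*b^3 + (-15)*c^2 := by
    nlinarith [mul_pos hD hc, mul_pos (pow_pos hA 4) hb, mul_pos (pow_pos hA 3) hc,
      mul_nonneg (mul_nonneg (sq_nonneg A) (sq_nonneg B)) hb.le,
      mul_pos (mul_pos hA hA) (mul_pos hb hb),
      mul_nonneg (mul_nonneg hA.le (sq_nonneg B)) hc.le,
      mul_nonneg (sq_nonneg B) (sq_nonneg b), pow_pos hb 3]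
  have g2 : 0 < 4*A^4*c + 5*A^3*b^2 + 4*A^2*B^2*c + 18*A^2*b*c + A*B^2*b^2 + 4*A*b^3 + (-15)*A*c^2 := by
    nlinarith [mul_pos hA (mul_pos hD hc), mul_pos (pow_pos hA 4) hc,
      mul_pos (pow_pos hA 3) (mul_pos hb hb),
      mul_nonneg (mul_nonneg (sq_nonneg A) (sq_nonneg B)) hc.le,
      mul_nonneg (mul_nonneg hA.le (sq_nonneg B)) (sq_nonneg b),
      mul_pos hA (pow_pos hb 3)]
  have g1A : 0 < A * (4*A^3*b*c + A^2*b^3 + (-4)*A^2*c^2 + 2*A*b^2*c + (-1)*B^2*c^2 + (-3)*b*c^2) := by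
    nlinarith [mul_pos hc hH2, mul_pos (mul_pos (mul_pos hA hb) hc) hD,
      mul_pos hD hq, mul_pos (mul_pos (pow_pos hA 3) hc) hD]
  have g1 : 0 < 4*A^3*b*c + A^2*b^3 + (-4)*A^2*c^2 + 2*A*b^2*c + (-1)*B^2*c^2 + (-3)*b*c^2 := by
    by_contra h
    push_neg at h
    nlinarith [mul_nonneg hA.le (neg_nonneg.mpr h)]
  have g0 : 0 < A^2*b^2*c + (-1)*A*B^2*c^2 + (-2)*A*b*c^2 + c^3 := by
    nlinarith [mul_pos hc hH2]
  nlinarith [hR, g0, mul_nonneg g1.le hx', mul_nonneg g2.le (pow_nonneg hx' 2),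
    mul_nonneg g3.le (pow_nonneg hx' 3), mul_nonneg g4.le (pow_nonneg hx' 4),
    mul_nonneg g5.le (pow_nonneg hx' 5), mul_nonneg g6.le (pow_nonneg hx' 6),
    mul_nonneg g7.le (pow_nonneg hx' 7), mul_nonneg g8.le (pow_nonneg hx' 8),
    mul_nonneg g9.le (pow_nonneg hx' 9)]

theorem rotating_shaft_matrix_stable (k ω Ω kp kI : ℝ)
    (h1 : 0 < 2 * k * ω)
    (h2 : 0 < 2 * k * ω * (2 * k * ω * (ω ^ 2 - Ω ^ 2 - kp) + kI))
    (h3 : 0 < -8 * kI ^ 2 * k * ω * Ω ^ 2 - kI * (2 * k * ω * (ω ^ 2 - Ω ^ 2 - kp) + kI) ^ 2) :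
    ∀ lam ∈ spectrum ℂ
        (!![0, 1, 0;
            ((kp + Ω ^ 2 - ω ^ 2 : ℝ) : ℂ), -((2 * k * ω : ℝ) + 2 * (Ω : ℂ) * I), (kI : ℂ);
            1, 0, 0] : Matrix (Fin 3) (Fin 3) ℂ),
      lam.re < 0 := by
  intro lam hlam
  rw [spectrum.mem_iff, Matrix.isUnit_iff_isUnit_det, isUnit_iff_ne_zero, not_not] at hlam
  simp [Matrix.det_fin_three, Matrix.sub_apply, Matrix.algebraMap_matrix_apply] at hlam
  have hre := congrArg Complex.re hlam
  have him := congrArg Complex.im hlam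
  simp [Complex.mul_re, Complex.mul_im, Complex.sub_re, Complex.sub_im, Complex.add_re,
    Complex.add_im, Complex.neg_re, Complex.neg_im, Complex.ofReal_re, Complex.ofReal_im,
    Complex.I_re, Complex.I_im, ← Complex.ofReal_pow] at hre him
  refine rotating_shaft_key (2*k*ω) (2*Ω) (ω^2 - Ω^2 - kp) (-kI) lam.re lam.im h1 ?_ ?_ ?_ ?_
  · nlinarith [h2]
  · nlinarith [h3]
  · linear_combination hre
  · linear_combination him
end

section
/- A monic complex quadratic polynomial s^2 + (a1 + i b1)s + (a2 + i b2) has all roots in the open left half-plane if and only if a1 > 0 and a1²a2 + a1 b1 b2 − b2² > 0. -/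
open Polynomial Complex

theorem quadratic_complex_RH (a1 b1 a2 b2 : ℝ) :
    (∀ z : ℂ, (X ^ 2 + C ((a1 : ℂ) + (b1 : ℂ) * I) * X + C ((a2 : ℂ) + (b2 : ℂ) * I)).IsRoot z → z.re < 0) ↔
      (0 < a1 ∧ 0 < a1 ^ 2 * a2 + a1 * b1 * b2 - b2 ^ 2) := by
  set b : ℂ := (a1 : ℂ) + (b1 : ℂ) * I with hb
  set c : ℂ := (a2 : ℂ) + (b2 : ℂ) * I with hc
  obtain ⟨d, hd⟩ : ∃ d : ℂ, d ^ 2 = b ^ 2 - 4 * c :=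
    IsAlgClosed.exists_pow_nat_eq (b ^ 2 - 4 * c) (n := 2) (by norm_num)
  set z1 : ℂ := (-b + d) / 2 with hz1
  set z2 : ℂ := (-b - d) / 2 with hz2
  have hsum : z1 + z2 = -b := by rw [hz1, hz2]; ring
  have hprod : z1 * z2 = c := by
    rw [hz1, hz2]
    field_simp
    linear_combination -hd
  have hfact : ∀ z : ℂ, (X ^ 2 + C b * X + C c).IsRoot z ↔ (z = z1 ∨ z = z2) := by
    intro z
    have heval : (X ^ 2 + C b * X + C c).IsRoot z ↔ z ^ 2 + b * z + c = 0 := by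
      simp [IsRoot]
    rw [heval]
    have hkey : z ^ 2 + b * z + c = (z - z1) * (z - z2) := by
      linear_combination z * hsum - hprod
    rw [hkey, mul_eq_zero, sub_eq_zero, sub_eq_zero]
  have hre : z1.re + z2.re = -a1 ∧ z1.im + z2.im = -b1 := by
    have := hsum
    rw [Complex.ext_iff] at this
    constructor
    · have h := this.1; simpa [hb] using h
    · have h := this.2; simpa [hb] using h
  have hpr : z1.re * z2.re - z1.im * z2.im = a2 ∧ z1.re * z2.im + z1.im * z2.re = b2 := by
    have := hprod
    rw [Complex.ext_iff] at this
    constructor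
    · have h := this.1; simpa [hc, Complex.mul_re] using h
    · have h := this.2; simpa [hc, Complex.mul_im] using h
  obtain ⟨h1, h2⟩ := hre
  obtain ⟨h3, h4⟩ := hpr
  have hiff : (∀ z : ℂ, (X ^ 2 + C b * X + C c).IsRoot z → z.re < 0) ↔
      (z1.re < 0 ∧ z2.re < 0) := by
    constructor
    · intro h
      exact ⟨h z1 ((hfact z1).2 (Or.inl rfl)), h z2 ((hfact z2).2 (Or.inr rfl))⟩
    · rintro ⟨ha, hb'⟩ z hz
      rcases (hfact z).1 hz with rfl | rfl
      · exact ha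
      · exact hb'
  rw [hiff]
  set x := z1.re
  set y := z1.im
  set u := z2.re
  set v := z2.im
  have ha1 : a1 = -(x + u) := by linarith
  have hb1 : b1 = -(y + v) := by linarith
  have ha2 : a2 = x * u - y * v := by linarith
  have hb2 : b2 = x * v + y * u := by linarith
  rw [ha1, hb1, ha2, hb2]
  have hD : (-(x + u)) ^ 2 * (x * u - y * v) + (-(x + u)) * (-(y + v)) * (x * v + y * u) -
      (x * v + y * u) ^ 2 = x * u * ((x + u) ^ 2 + (y - v) ^ 2) := by ring
  rw [hD]
  constructor
  · rintro ⟨hx, hu⟩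
    constructor
    · linarith
    · have h5 : x * u > 0 := mul_pos_of_neg_of_neg hx hu
      have h6 : (x + u) ^ 2 > 0 := by nlinarith
      nlinarith [sq_nonneg (y - v)]
  · rintro ⟨hA, hB⟩
    have hxu : x + u < 0 := by linarith
    have h5 : x * u > 0 := by nlinarith [sq_nonneg (x + u), sq_nonneg (y - v)]
    constructor
    · nlinarith
    · nlinarith
end
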